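/- arXiv:1601.06756 — 2 statements merged into one kernel-verified Lean document; each statement's English description precedes it below -/
import Mathlib

section
/- (Mrs. Gerber's Lemma, scalar version) For any fixed p ∈ [0, 1/2], the function ν ↦ H_b(H_b⁻¹(ν) ∗ p) is convex on [0, 1]. -/
open scoped BigOperators

noncomputable def Hb (x : ℝ) : ℝ := -(x * Real.logb 2 x) - (1 - x) * Real.logb 2 (1 - x)

noncomputable def star (p q : ℝ) : ℝ := p * (1 - q) + (1 - p) * q

lemma Hb_eq (x : ℝ) :
    Hb x = (-(x * Real.log x) - (1 - x) * Real.log (1 - x)) / Real.log 2 := by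
  simp only [Hb, Real.logb]; ring

lemma continuous_Hb : Continuous Hb := by
  have h : Continuous fun x : ℝ => (-(x * Real.log x) - (1 - x) * Real.log (1 - x)) / Real.log 2 :=
    (Real.continuous_mul_log.neg.sub
      (Real.continuous_mul_log.comp (continuous_const.sub continuous_id))).div_const _
  convert h using 1
  funext x
  exact Hb_eq x

lemma hasDerivAt_Hb {x : ℝ} (h0 : 0 < x) (h1 : x < 1) :
    HasDerivAt Hb ((Real.log (1 - x) - Real.log x) / Real.log 2) x := by
  have hx1 : (0:ℝ) < 1 - x := by linarith
  have h1' : HasDerivAt (fun y : ℝ => y * Real.log y) (Real.log x + 1) x :=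
    Real.hasDerivAt_mul_log h0.ne'
  have hin : HasDerivAt (fun y : ℝ => 1 - y) (-1) x := by
    simpa using (hasDerivAt_id x).const_sub 1
  have h2 : HasDerivAt (fun y : ℝ => (1 - y) * Real.log (1 - y))
      ((Real.log (1 - x) + 1) * (-1)) x :=
    (Real.hasDerivAt_mul_log hx1.ne').comp x hin
  have h3 : HasDerivAt (fun y : ℝ => (-(y * Real.log y) - (1 - y) * Real.log (1 - y)) / Real.log 2)
      ((-(Real.log x + 1) - (Real.log (1 - x) + 1) * (-1)) / Real.log 2) x :=
    (h1'.neg.sub h2).div_const _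
  have : (fun y : ℝ => (-(y * Real.log y) - (1 - y) * Real.log (1 - y)) / Real.log 2) = Hb := by
    funext y; exact (Hb_eq y).symm
  rw [this] at h3
  convert h3 using 1
  ring

lemma Hb_zero : Hb 0 = 0 := by simp [Hb]

lemma Hb_half : Hb (1/2) = 1 := by
  have h : Real.logb 2 (1/2 : ℝ) = -1 := by
    rw [show (1:ℝ)/2 = 2⁻¹ by norm_num, Real.logb_inv, Real.logb_self_eq_one] <;> norm_num
  rw [Hb]
  norm_num [h]

lemma Hb_strictMono : StrictMonoOn Hb (Set.Icc 0 (1/2)) := by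
  apply strictMonoOn_of_deriv_pos (convex_Icc _ _) continuous_Hb.continuousOn
  intro x hx
  rw [interior_Icc] at hx
  have h0 := hx.1
  have h1 : x < 1 := by have := hx.2; linarith
  rw [(hasDerivAt_Hb h0 h1).deriv]
  have hlog : Real.log x < Real.log (1 - x) := Real.log_lt_log h0 (by have := hx.2; linarith)
  have h2 : (0:ℝ) < Real.log 2 := Real.log_pos (by norm_num)
  exact div_pos (by linarith) h2

section
open Set

lemma lam_ge {t : ℝ} (h0 : 0 ≤ t) (h1 : t < 1) :
    2 * t ≤ Real.log (1 + t) - Real.log (1 - t) := by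
  set φ : ℝ → ℝ := fun t => Real.log (1 + t) - Real.log (1 - t) - 2 * t with hφ
  have hd : ∀ u ∈ Ico (0:ℝ) 1, HasDerivAt φ ((1 + u)⁻¹ * 1 - (1 - u)⁻¹ * (-1) - 2) u := by
    intro u hu
    have hu1 : (0:ℝ) < 1 + u := by linarith [hu.1]
    have hu2 : (0:ℝ) < 1 - u := by linarith [hu.2]
    have ha : HasDerivAt (fun y : ℝ => Real.log (1 + y)) ((1 + u)⁻¹ * 1) u :=
      (Real.hasDerivAt_log hu1.ne').comp u ((hasDerivAt_id u).const_add 1)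
    have hb : HasDerivAt (fun y : ℝ => Real.log (1 - y)) ((1 - u)⁻¹ * (-1)) u :=
      (Real.hasDerivAt_log hu2.ne').comp u (by simpa using (hasDerivAt_id u).const_sub 1)
    exact ((ha.sub hb).sub ((hasDerivAt_id u).const_mul 2)).congr_deriv (by ring)
  have hmono : MonotoneOn φ (Ico (0:ℝ) 1) := by
    apply monotoneOn_of_deriv_nonneg (convex_Ico _ _)
    · exact fun u hu => (hd u hu).continuousAt.continuousWithinAt
    · rw [interior_Ico]
      exact fun u hu => (hd u ⟨hu.1.le, hu.2⟩).differentiableAt.differentiableWithinAt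
    · rw [interior_Ico]
      intro u hu
      rw [(hd u ⟨hu.1.le, hu.2⟩).deriv]
      have hu1 : (0:ℝ) < 1 + u := by linarith [hu.1]
      have hu2 : (0:ℝ) < 1 - u := by linarith [hu.2]
      have he : (1 + u)⁻¹ * 1 - (1 - u)⁻¹ * (-1) - 2 = (2 * u^2) / ((1 + u) * (1 - u)) := by
        field_simp; ring
      rw [he]; positivity
  have h := hmono (left_mem_Ico.2 one_pos) ⟨h0, h1⟩ h0
  simp only [hφ] at h
  simp at h
  linarith [h]

lemma F_antitone : AntitoneOn (fun t : ℝ => (t⁻¹ - t) * (Real.log (1 + t) - Real.log (1 - t)))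
    (Set.Ioo 0 1) := by
  set F : ℝ → ℝ := fun t => (t⁻¹ - t) * (Real.log (1 + t) - Real.log (1 - t)) with hF
  have hd : ∀ u ∈ Ioo (0:ℝ) 1, HasDerivAt F
      ((-(u^2)⁻¹ - 1) * (Real.log (1 + u) - Real.log (1 - u))
        + (u⁻¹ - u) * ((1 + u)⁻¹ * 1 - (1 - u)⁻¹ * (-1))) u := by
    intro u hu
    have hu0 : (0:ℝ) < u := hu.1
    have hu1 : (0:ℝ) < 1 + u := by linarith [hu.1]
    have hu2 : (0:ℝ) < 1 - u := by linarith [hu.2]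
    have h1 : HasDerivAt (fun y : ℝ => y⁻¹ - y) (-(u^2)⁻¹ - 1) u :=
      (hasDerivAt_inv hu0.ne').sub (hasDerivAt_id u)
    have ha : HasDerivAt (fun y : ℝ => Real.log (1 + y)) ((1 + u)⁻¹ * 1) u :=
      (Real.hasDerivAt_log hu1.ne').comp u ((hasDerivAt_id u).const_add 1)
    have hb : HasDerivAt (fun y : ℝ => Real.log (1 - y)) ((1 - u)⁻¹ * (-1)) u :=
      (Real.hasDerivAt_log hu2.ne').comp u (by simpa using (hasDerivAt_id u).const_sub 1)
    exact h1.mul (ha.sub hb)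
  apply antitoneOn_of_deriv_nonpos (convex_Ioo _ _)
  · exact fun u hu => (hd u hu).continuousAt.continuousWithinAt
  · rw [isOpen_Ioo.interior_eq]
    exact fun u hu => (hd u hu).differentiableAt.differentiableWithinAt
  · rw [isOpen_Ioo.interior_eq]
    intro u hu
    rw [(hd u hu).deriv]
    have hu0 : (0:ℝ) < u := hu.1
    have hu1 : (0:ℝ) < 1 + u := by linarith [hu.1]
    have hu2 : (0:ℝ) < 1 - u := by linarith [hu.2]
    have hL : 2 * u ≤ Real.log (1 + u) - Real.log (1 - u) := lam_ge hu0.le hu.2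
    have he1 : (u⁻¹ - u) * ((1 + u)⁻¹ * 1 - (1 - u)⁻¹ * (-1)) = 2 * u⁻¹ := by
      field_simp; ring
    rw [he1]
    have he2 : (-(u^2)⁻¹ - 1) * (2 * u) = -(2 * u⁻¹) - 2 * u := by
      field_simp
    have hcoef : -(u^2)⁻¹ - 1 < 0 := by
      have : (0:ℝ) < (u^2)⁻¹ := by positivity
      linarith
    nlinarith [mul_le_mul_of_nonpos_left hL hcoef.le]

lemma key_ineq {s u : ℝ} (hs0 : 0 ≤ s) (hs1 : s ≤ 1) (hu0 : 0 < u) (hu1 : u < 1) :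
    s * ((1 - u^2) * (Real.log (1 + u) - Real.log (1 - u))) ≤
      (1 - (s*u)^2) * (Real.log (1 + s*u) - Real.log (1 - s*u)) := by
  rcases eq_or_lt_of_le hs0 with rfl | hs
  · simp
  · have hsu0 : 0 < s * u := mul_pos hs hu0
    have hsu1 : s * u ≤ u := by nlinarith
    have hF := F_antitone (Set.mem_Ioo.2 ⟨hsu0, lt_of_le_of_lt hsu1 hu1⟩)
      (Set.mem_Ioo.2 ⟨hu0, hu1⟩) hsu1
    simp only [] at hF
    have hmul := mul_le_mul_of_nonneg_left hF hsu0.le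
    have c1 : s * u * ((s*u)⁻¹ - s*u) = 1 - (s*u)^2 := by
      rw [mul_sub, mul_inv_cancel₀ hsu0.ne']; ring
    have c2 : s * u * (u⁻¹ - u) = s * (1 - u^2) := by
      rw [mul_sub, mul_assoc, mul_inv_cancel₀ hu0.ne']; ring
    calc s * ((1 - u^2) * (Real.log (1 + u) - Real.log (1 - u)))
        = s * u * (u⁻¹ - u) * (Real.log (1 + u) - Real.log (1 - u)) := by rw [c2]; ring
      _ ≤ s * u * ((s*u)⁻¹ - s*u) * (Real.log (1 + s*u) - Real.log (1 - s*u)) := by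
          rw [mul_assoc (s*u), mul_assoc (s*u)]; exact hmul
      _ = (1 - (s*u)^2) * (Real.log (1 + s*u) - Real.log (1 - s*u)) := by rw [c1]


lemma key2 {a p : ℝ} (ha0 : 0 < a) (ha1 : a < 1/2) (hp0 : 0 ≤ p) (hp1 : p ≤ 1/2) :
    (1 - 2*p) * ((a*(1-a)) * (Real.log (1-a) - Real.log a)) ≤
      (star a p * (1 - star a p)) * (Real.log (1 - star a p) - Real.log (star a p)) := by
  set b := star a p with hb
  have hbval : b = a*(1-p) + (1-a)*p := rfl
  have hb0 : 0 < b := by rw [hbval]; nlinarith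
  have hb2 : b ≤ 1/2 := by rw [hbval]; nlinarith
  have h := key_ineq (s := 1-2*p) (u := 1-2*a) (by linarith) (by linarith)
    (by linarith) (by linarith)
  have hsu : (1-2*p) * (1-2*a) = 1 - 2*b := by rw [hbval]; ring
  rw [hsu] at h
  have e1 : (1:ℝ) + (1-2*a) = 2*(1-a) := by ring
  have e2 : (1:ℝ) - (1-2*a) = 2*a := by ring
  have e3 : (1:ℝ) + (1-2*b) = 2*(1-b) := by ring
  have e4 : (1:ℝ) - (1-2*b) = 2*b := by ring
  rw [e1, e2, e3, e4] at h
  rw [Real.log_mul two_ne_zero (by linarith), Real.log_mul two_ne_zero ha0.ne',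
    Real.log_mul two_ne_zero (by linarith), Real.log_mul two_ne_zero hb0.ne'] at h
  have e5 : (1:ℝ) - (1-2*a)^2 = 4*(a*(1-a)) := by ring
  have e6 : (1:ℝ) - (1-2*b)^2 = 4*(b*(1-b)) := by ring
  rw [e5, e6] at h
  nlinarith [h]

lemma r_mono {p : ℝ} (hp0 : 0 ≤ p) (hp1 : p ≤ 1/2) :
    MonotoneOn (fun a => (1-2*p) * (Real.log (1 - star a p) - Real.log (star a p))
      / (Real.log (1-a) - Real.log a)) (Set.Ioo 0 (1/2)) := by
  set r : ℝ → ℝ := fun a => (1-2*p) * (Real.log (1 - star a p) - Real.log (star a p))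
      / (Real.log (1-a) - Real.log a) with hr
  have hfacts : ∀ a ∈ Ioo (0:ℝ) (1/2), 0 < star a p ∧ star a p ≤ 1/2 ∧
      0 < Real.log (1-a) - Real.log a := by
    intro a ha
    obtain ⟨ha0, ha1⟩ := ha
    refine ⟨by simp only [_root_.star]; nlinarith, by simp only [_root_.star]; nlinarith, ?_⟩
    have : Real.log a < Real.log (1-a) := Real.log_lt_log ha0 (by linarith)
    linarith
  have hd : ∀ a ∈ Ioo (0:ℝ) (1/2), HasDerivAt r
      (((1-2*p) * ((1 - star a p)⁻¹ * (-(1-2*p)) - (star a p)⁻¹ * (1-2*p))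
          * (Real.log (1-a) - Real.log a)
        - (1-2*p) * (Real.log (1 - star a p) - Real.log (star a p))
          * ((1-a)⁻¹ * (-1) - a⁻¹ * 1))
        / (Real.log (1-a) - Real.log a)^2) a := by
    intro a ha
    obtain ⟨hb0, hb2, hD⟩ := hfacts a ha
    obtain ⟨ha0, ha1⟩ := ha
    have hb1 : star a p < 1 := by linarith
    have hstar : HasDerivAt (fun x => star x p) (1-2*p) a := by
      have : (fun x => star x p) = fun x : ℝ => (1-2*p)*x + p := by
        funext x; simp only [_root_.star]; ring
      rw [this]
      simpa using ((hasDerivAt_id a).const_mul (1-2*p)).add_const p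
    have hN : HasDerivAt (fun x => Real.log (1 - star x p) - Real.log (star x p))
        ((1 - star a p)⁻¹ * (-(1-2*p)) - (star a p)⁻¹ * (1-2*p)) a := by
      have h1 : HasDerivAt (fun x => Real.log (1 - star x p))
          ((1 - star a p)⁻¹ * (-(1-2*p))) a :=
        (Real.hasDerivAt_log (by linarith)).comp a (by simpa using hstar.const_sub 1)
      have h2 : HasDerivAt (fun x => Real.log (star x p)) ((star a p)⁻¹ * (1-2*p)) a :=
        by have := (Real.hasDerivAt_log hb0.ne').comp a hstar; exact this
      exact h1.sub h2
    have hDd : HasDerivAt (fun x : ℝ => Real.log (1-x) - Real.log x)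
        ((1-a)⁻¹ * (-1) - a⁻¹ * 1) a := by
      have h1 : HasDerivAt (fun x : ℝ => Real.log (1-x)) ((1-a)⁻¹ * (-1)) a :=
        (Real.hasDerivAt_log (by linarith)).comp a (by simpa using (hasDerivAt_id a).const_sub 1)
      have h2 : HasDerivAt (fun x : ℝ => Real.log x) (a⁻¹ * 1) a := by
        simpa using Real.hasDerivAt_log ha0.ne'
      exact h1.sub h2
    exact (hN.const_mul (1-2*p)).div hDd hD.ne'
  apply monotoneOn_of_deriv_nonneg (convex_Ioo _ _)
  · exact fun a ha => (hd a ha).continuousAt.continuousWithinAt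
  · rw [isOpen_Ioo.interior_eq]
    exact fun a ha => (hd a ha).differentiableAt.differentiableWithinAt
  · rw [isOpen_Ioo.interior_eq]
    intro a ha
    rw [(hd a ha).deriv]
    obtain ⟨hb0, hb2, hD⟩ := hfacts a ha
    obtain ⟨ha0, ha1⟩ := ha
    have hb1 : (0:ℝ) < 1 - star a p := by linarith
    have ha1' : (0:ℝ) < 1 - a := by linarith
    apply div_nonneg _ (sq_nonneg _)
    have e1 : (1 - star a p)⁻¹ * (-(1-2*p)) - (star a p)⁻¹ * (1-2*p)
        = -((1-2*p) * (star a p * (1 - star a p))⁻¹) := by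
      field_simp
      ring
    have e2 : ((1:ℝ)-a)⁻¹ * (-1) - a⁻¹ * 1 = -((a*(1-a))⁻¹) := by
      field_simp
      ring
    rw [e1, e2]
    have hkey := key2 ha0 ha1 hp0 hp1
    have hP : (0:ℝ) < a*(1-a) := mul_pos ha0 ha1'
    have hQ : (0:ℝ) < star a p * (1 - star a p) := mul_pos hb0 hb1
    have hstep : (1-2*p) * (Real.log (1-a) - Real.log a) * (star a p * (1 - star a p))⁻¹
        ≤ (Real.log (1 - star a p) - Real.log (star a p)) * (a*(1-a))⁻¹ := by
      rw [← div_eq_mul_inv, ← div_eq_mul_inv, div_le_div_iff₀ hQ hP]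
      nlinarith [hkey]
    have hfin : (1-2*p) * -((1-2*p) * (star a p * (1 - star a p))⁻¹) * (Real.log (1-a) - Real.log a)
        - (1-2*p) * (Real.log (1 - star a p) - Real.log (star a p)) * -((a*(1-a))⁻¹)
        = (1-2*p) * ((Real.log (1 - star a p) - Real.log (star a p)) * (a*(1-a))⁻¹
            - (1-2*p) * (Real.log (1-a) - Real.log a) * (star a p * (1 - star a p))⁻¹) := by ring
    rw [hfin]
    exact mul_nonneg (by linarith) (by linarith [hstep])

end

theorem mrs_gerber_scalar (p : ℝ) (hp : p ∈ Set.Icc (0:ℝ) (1/2))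
    (g : ℝ → ℝ) (hg : ∀ y ∈ Set.Icc (0:ℝ) 1, g y ∈ Set.Icc (0:ℝ) (1/2) ∧ Hb (g y) = y) :
    ConvexOn ℝ (Set.Icc (0:ℝ) 1) (fun ν => Hb (star (g ν) p)) := by
  obtain ⟨hp0, hp1⟩ := hp
  have hmem : ∀ y ∈ Set.Icc (0:ℝ) 1, g y ∈ Set.Icc (0:ℝ) (1/2) := fun y hy => (hg y hy).1
  have hHbg : ∀ y ∈ Set.Icc (0:ℝ) 1, Hb (g y) = y := fun y hy => (hg y hy).2
  have hgsm : StrictMonoOn g (Set.Icc 0 1) := by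
    intro x hx y hy hxy
    by_contra h
    push_neg at h
    have := Hb_strictMono.monotoneOn (hmem y hy) (hmem x hx) h
    rw [hHbg x hx, hHbg y hy] at this
    linarith
  have h0mem : (0:ℝ) ∈ Set.Icc (0:ℝ) 1 := by constructor <;> norm_num
  have h1mem : (1:ℝ) ∈ Set.Icc (0:ℝ) 1 := by constructor <;> norm_num
  have hg0 : g 0 = 0 := by
    apply Hb_strictMono.injOn (hmem 0 h0mem) (by constructor <;> norm_num)
    rw [hHbg 0 h0mem, Hb_zero]
  have hg1 : g 1 = 1/2 := by
    apply Hb_strictMono.injOn (hmem 1 h1mem) (by constructor <;> norm_num)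
    rw [hHbg 1 h1mem, Hb_half]
  have hginterior : ∀ ν ∈ Set.Ioo (0:ℝ) 1, g ν ∈ Set.Ioo (0:ℝ) (1/2) := by
    intro ν hν
    constructor
    · rw [← hg0]; exact hgsm h0mem ⟨hν.1.le, hν.2.le⟩ hν.1
    · rw [← hg1]; exact hgsm ⟨hν.1.le, hν.2.le⟩ h1mem hν.2
  have hsurj : ∀ x ∈ Set.Icc (0:ℝ) (1/2), Hb x ∈ Set.Icc (0:ℝ) 1 ∧ g (Hb x) = x := by
    intro x hx
    have h1 : (0:ℝ) ≤ Hb x := by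
      have := Hb_strictMono.monotoneOn (by constructor <;> norm_num) hx hx.1
      rwa [Hb_zero] at this
    have h2 : Hb x ≤ 1 := by
      have := Hb_strictMono.monotoneOn hx (by constructor <;> norm_num) hx.2
      rwa [Hb_half] at this
    exact ⟨⟨h1, h2⟩, Hb_strictMono.injOn (hmem _ ⟨h1, h2⟩) hx (hHbg _ ⟨h1, h2⟩)⟩
  have hgc : ContinuousOn g (Set.Icc 0 1) := by
    intro a ha
    have hright : a < 1 → ContinuousWithinAt g (Set.Ici a) a := by
      intro h1
      apply hgsm.continuousWithinAt_right_of_exists_between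
        (Icc_mem_nhdsGE_of_mem ⟨ha.1, h1⟩)
      intro c hc
      have hga0 : (0:ℝ) ≤ g a := (hmem a ha).1
      have hga : g a < 1/2 := by rw [← hg1]; exact hgsm ha h1mem h1
      have hminmem : min c (1/2) ∈ Set.Icc (0:ℝ) (1/2) :=
        ⟨le_min (by linarith) (by norm_num), min_le_right _ _⟩
      refine ⟨Hb (min c (1/2)), (hsurj _ hminmem).1, ?_⟩
      rw [(hsurj _ hminmem).2]
      exact ⟨lt_min hc hga, min_le_left _ _⟩
    have hleft : 0 < a → ContinuousWithinAt g (Set.Iic a) a := by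
      intro h0
      apply hgsm.continuousWithinAt_left_of_exists_between
        (Icc_mem_nhdsLE_of_mem ⟨h0, ha.2⟩)
      intro c hc
      have hga0 : 0 < g a := by rw [← hg0]; exact hgsm h0mem ha h0
      have hga2 : g a ≤ 1/2 := (hmem a ha).2
      have hmaxmem : max c 0 ∈ Set.Icc (0:ℝ) (1/2) :=
        ⟨le_max_right _ _, max_le (by linarith) (by norm_num)⟩
      refine ⟨Hb (max c 0), (hsurj _ hmaxmem).1, ?_⟩
      rw [(hsurj _ hmaxmem).2]
      exact ⟨le_max_left _ _, max_lt hc hga0⟩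
    rcases eq_or_lt_of_le ha.1 with h0 | h0
    · exact (hright (by linarith [ha.2]; )).mono (by rw [← h0]; exact fun x hx => hx.1)
    · rcases eq_or_lt_of_le ha.2 with h1 | h1
      · exact (hleft h0).mono (by rw [h1]; exact fun x hx => hx.2)
      · exact ((hleft h0).union (hright h1)).mono
          (fun x _ => (le_total x a).elim Or.inl Or.inr)
  have hfd : ∀ ν ∈ Set.Ioo (0:ℝ) 1, HasDerivAt (fun ν => Hb (star (g ν) p))
      ((1-2*p) * (Real.log (1 - star (g ν) p) - Real.log (star (g ν) p))
        / (Real.log (1 - g ν) - Real.log (g ν))) ν := by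
    intro ν hν
    obtain ⟨hA0, hA1⟩ := hginterior ν hν
    have hA1' : g ν < 1 := by linarith
    have hDapos : 0 < Real.log (1 - g ν) - Real.log (g ν) :=
      sub_pos.2 (Real.log_lt_log hA0 (by linarith))
    have hl2 : (0:ℝ) < Real.log 2 := Real.log_pos (by norm_num)
    have hcontg : ContinuousAt g ν :=
      (hgc ν ⟨hν.1.le, hν.2.le⟩).continuousAt (Icc_mem_nhds hν.1 hν.2)
    have hfg : ∀ᶠ y in nhds ν, Hb (g y) = y := by
      filter_upwards [Icc_mem_nhds hν.1 hν.2] with y hy using hHbg y hy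
    have hgd : HasDerivAt g (((Real.log (1 - g ν) - Real.log (g ν))/Real.log 2)⁻¹) ν :=
      HasDerivAt.of_local_left_inverse hcontg (hasDerivAt_Hb hA0 hA1')
        (ne_of_gt (div_pos hDapos hl2)) hfg
    have hb0 : 0 < star (g ν) p := by simp only [_root_.star]; nlinarith
    have hb2 : star (g ν) p ≤ 1/2 := by simp only [_root_.star]; nlinarith
    have hb1 : star (g ν) p < 1 := by linarith
    have hstarg : HasDerivAt (fun ν => star (g ν) p)
        ((1-2*p) * (((Real.log (1 - g ν) - Real.log (g ν))/Real.log 2)⁻¹)) ν := by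
      have heq : (fun ν => star (g ν) p) = fun ν => (1-2*p) * g ν + p := by
        funext x; simp only [_root_.star]; ring
      rw [heq]
      exact (hgd.const_mul (1-2*p)).add_const p
    have hcomp := (hasDerivAt_Hb hb0 hb1).comp ν hstarg
    refine hcomp.congr_deriv ?_
    field_simp
  have hcontf : ContinuousOn (fun ν => Hb (star (g ν) p)) (Set.Icc 0 1) := by
    apply continuous_Hb.comp_continuousOn
    have heq : (fun ν => star (g ν) p) = fun ν => (1-2*p) * g ν + p := by
      funext x; simp only [_root_.star]; ring
    rw [heq]
    exact (continuousOn_const.mul hgc).add continuousOn_const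
  apply MonotoneOn.convexOn_of_deriv (convex_Icc 0 1) hcontf
  · rw [interior_Icc]
    exact fun ν hν => (hfd ν hν).differentiableAt.differentiableWithinAt
  · rw [interior_Icc]
    intro x hx y hy hxy
    rw [(hfd x hx).deriv, (hfd y hy).deriv]
    have := r_mono hp0 hp1 (hginterior x hx) (hginterior y hy)
      (hgsm.monotoneOn ⟨hx.1.le, hx.2.le⟩ ⟨hy.1.le, hy.2.le⟩ hxy)
    simpa using this
end

section
/- (Mrs. Gerber's Lemma for a binary Markov chain) Let U, X, Y be finite random variables such that U − X − Y is a Markov chain, X takes values in {0,1}, and Y is the output of a binary symmetric channel with crossover probability p ∈ [0,1/2] applied to X. Then H(Y|U) ≥ H_b(H_b⁻¹(H(X|U)) ∗ p), where entropies are in bits. -/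
open scoped BigOperators

structure FinProb (Ω : Type) [Fintype Ω] where
  p : Ω → ℝ
  nonneg : ∀ ω, 0 ≤ p ω
  sum_one : ∑ ω, p ω = 1

noncomputable def pmfOf {Ω α : Type} [Fintype Ω] [DecidableEq α]
    (μ : FinProb Ω) (X : Ω → α) (a : α) : ℝ :=
  ∑ ω, if X ω = a then μ.p ω else 0

noncomputable def H2 {Ω α : Type} [Fintype Ω] [Fintype α] [DecidableEq α]
    (μ : FinProb Ω) (X : Ω → α) : ℝ :=
  -∑ a, pmfOf μ X a * Real.logb 2 (pmfOf μ X a)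

noncomputable def condH2 {Ω α β : Type} [Fintype Ω] [Fintype α] [Fintype β]
    [DecidableEq α] [DecidableEq β] (μ : FinProb Ω) (X : Ω → α) (Y : Ω → β) : ℝ :=
  H2 μ (fun ω => (X ω, Y ω)) - H2 μ Y

noncomputable def MI2 {Ω α β : Type} [Fintype Ω] [Fintype α] [Fintype β]
    [DecidableEq α] [DecidableEq β] (μ : FinProb Ω) (X : Ω → α) (Y : Ω → β) : ℝ :=
  H2 μ X + H2 μ Y - H2 μ (fun ω => (X ω, Y ω))

def Markov3 {Ω α β γ : Type} [Fintype Ω] [DecidableEq α] [DecidableEq β] [DecidableEq γ]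
    (μ : FinProb Ω) (X : Ω → α) (Y : Ω → β) (Z : Ω → γ) : Prop :=
  ∀ a b c, pmfOf μ (fun ω => (X ω, Y ω, Z ω)) (a, b, c) * pmfOf μ Y b =
    pmfOf μ (fun ω => (X ω, Y ω)) (a, b) * pmfOf μ (fun ω => (Y ω, Z ω)) (b, c)

open Real Set

namespace MGL

noncomputable def L (x : ℝ) : ℝ := Real.log (1 - x) - Real.log x

lemma Hb_eq (x : ℝ) : Hb x = (-(x * Real.log x) - (1 - x) * Real.log (1 - x)) / Real.log 2 := by
  simp [Hb, Real.logb, div_eq_mul_inv]; ring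

lemma continuous_Hb : Continuous Hb := by
  have h1 : Continuous fun x : ℝ => x * Real.log x := Real.continuous_mul_log
  have h2 : Continuous fun x : ℝ => (1 - x) * Real.log (1 - x) :=
    h1.comp (continuous_const.sub continuous_id)
  have h3 : Continuous fun x : ℝ =>
      (-(x * Real.log x) - (1 - x) * Real.log (1 - x)) / Real.log 2 :=
    (h1.neg.sub h2).div_const _
  have he : Hb = fun x => (-(x * Real.log x) - (1 - x) * Real.log (1 - x)) / Real.log 2 :=
    funext Hb_eq
  rw [he]; exact h3

lemma hasDerivAt_Hb {x : ℝ} (h0 : 0 < x) (h1 : x < 1) :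
    HasDerivAt Hb (L x / Real.log 2) x := by
  have hx : x ≠ 0 := h0.ne'
  have hx1 : (1:ℝ) - x ≠ 0 := by linarith
  have d1 : HasDerivAt (fun y : ℝ => y * Real.log y) (Real.log x + 1) x :=
    Real.hasDerivAt_mul_log hx
  have dsub : HasDerivAt (fun y : ℝ => 1 - y) (-1) x := (hasDerivAt_id x).const_sub 1
  have d2 : HasDerivAt (fun y : ℝ => (1 - y) * Real.log (1 - y))
      ((Real.log (1 - x) + 1) * (-1)) x :=
    (Real.hasDerivAt_mul_log hx1).comp x dsub
  have d3 : HasDerivAt (fun y => (-(y * Real.log y) - (1 - y) * Real.log (1 - y)) / Real.log 2)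
      ((-(Real.log x + 1) - (Real.log (1 - x) + 1) * (-1)) / Real.log 2) x :=
    (d1.neg.sub d2).div_const _
  have he : Hb = fun y => (-(y * Real.log y) - (1 - y) * Real.log (1 - y)) / Real.log 2 :=
    funext Hb_eq
  rw [he]
  convert d3 using 1
  simp [L]; ring

lemma L_nonneg {x : ℝ} (h0 : 0 < x) (h2 : x ≤ 1/2) : 0 ≤ L x := by
  have : x ≤ 1 - x := by linarith
  simpa [L, sub_nonneg] using Real.log_le_log h0 this

lemma L_pos {x : ℝ} (h0 : 0 < x) (h2 : x < 1/2) : 0 < L x := by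
  have : x < 1 - x := by linarith
  simpa [L, sub_pos] using Real.log_lt_log h0 this

lemma L_anti : AntitoneOn L (Ioo (0:ℝ) 1) := by
  intro x hx y hy hxy
  simp only [mem_Ioo] at hx hy
  have h1 : Real.log (1 - y) ≤ Real.log (1 - x) :=
    Real.log_le_log (by linarith) (by linarith)
  have h2 : Real.log x ≤ Real.log y := Real.log_le_log hx.1 hxy
  simp only [L]; linarith

lemma strictMonoOn_Hb : StrictMonoOn Hb (Icc (0:ℝ) (1/2)) := by
  apply strictMonoOn_of_deriv_pos (convex_Icc _ _) continuous_Hb.continuousOn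
  intro x hx
  rw [interior_Icc] at hx
  have hd := hasDerivAt_Hb hx.1 (by linarith [hx.2] : x < 1)
  rw [hd.deriv]
  exact div_pos (L_pos hx.1 hx.2) (Real.log_pos (by norm_num))

lemma Hb_zero : Hb 0 = 0 := by simp [Hb]

lemma Hb_half : Hb (1/2) = 1 := by
  have : Real.logb 2 (1/2) = -1 := by
    rw [show (1:ℝ)/2 = 2⁻¹ by norm_num, Real.logb_inv, Real.logb_self_eq_one] <;> norm_num
  simp only [Hb]; rw [show (1:ℝ)-1/2 = 1/2 by norm_num, this]; norm_num

lemma Hb_symm (x : ℝ) : Hb (1 - x) = Hb x := by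
  simp [Hb]; ring_nf

lemma Hb_mem_Icc {x : ℝ} (hx : x ∈ Icc (0:ℝ) (1/2)) : Hb x ∈ Icc (0:ℝ) 1 := by
  constructor
  · rw [← Hb_zero]
    rcases eq_or_lt_of_le hx.1 with h | h
    · rw [← h]
    · exact (strictMonoOn_Hb (by constructor <;> norm_num) hx h).le
  · rw [← Hb_half]
    rcases eq_or_lt_of_le hx.2 with h | h
    · rw [h]
    · exact (strictMonoOn_Hb hx (by constructor <;> norm_num) h).le

variable {p : ℝ}

lemma star_eq (a p : ℝ) : star a p = p + (1 - 2*p) * a := by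
  rw [show star a p = a * (1-p) + (1-a) * p from rfl]; ring

lemma star_pos (hp : 0 ≤ p) {a : ℝ} (ha : 0 < a) (ha2 : a ≤ 1/2) : 0 < star a p := by
  rw [star_eq]
  nlinarith [mul_nonneg hp (by linarith : (0:ℝ) ≤ 1 - 2*a)]

lemma star_le_half (hp2 : p ≤ 1/2) (hp : 0 ≤ p) {a : ℝ} (ha : a ≤ 1/2) : star a p ≤ 1/2 := by
  rw [star_eq]; nlinarith

noncomputable def F (x : ℝ) : ℝ := x * (1 - x) * L x

lemma hasDerivAt_L {x : ℝ} (h0 : 0 < x) (h1 : x < 1) :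
    HasDerivAt L (-(1-x)⁻¹ - x⁻¹) x := by
  have hx : x ≠ 0 := h0.ne'
  have hx1 : (1:ℝ) - x ≠ 0 := by intro h; linarith [h]
  have d1 : HasDerivAt (fun y : ℝ => Real.log (1 - y)) ((1-x)⁻¹ * (-1)) x :=
    (Real.hasDerivAt_log hx1).comp x ((hasDerivAt_id x).const_sub 1)
  have d2 : HasDerivAt Real.log x⁻¹ x := Real.hasDerivAt_log hx
  have := d1.sub d2
  refine this.congr_deriv ?_
  ring

lemma hasDerivAt_F {x : ℝ} (h0 : 0 < x) (h1 : x < 1) :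
    HasDerivAt F ((1 - 2*x) * L x - 1) x := by
  have hx : x ≠ 0 := h0.ne'
  have hx1 : (1:ℝ) - x ≠ 0 := by intro h; linarith [h]
  have dq : HasDerivAt (fun y : ℝ => y * (1 - y)) (1 - 2*x) x := by
    have := (hasDerivAt_id x).mul ((hasDerivAt_id x).const_sub 1)
    simp only [id_eq] at this
    refine this.congr_deriv ?_; ring
  have hmul := dq.mul (hasDerivAt_L h0 h1)
  have he : x * (1 - x) * (-(1-x)⁻¹ - x⁻¹) = -1 := by field_simp; ring
  have : HasDerivAt (fun y => y * (1 - y) * L y) ((1 - 2*x) * L x + x * (1-x) * (-(1-x)⁻¹ - x⁻¹)) x := hmul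
  rw [he] at this
  have hF : F = fun y => y * (1 - y) * L y := rfl
  rw [hF]
  convert this using 1 <;> ring

lemma continuousOn_F : ContinuousOn F (Icc (0:ℝ) (1/2)) := by
  have h1 : ContinuousOn (fun x : ℝ => Real.log (1 - x)) (Icc (0:ℝ) (1/2)) := by
    apply ContinuousOn.log
    · exact continuousOn_const.sub continuousOn_id
    · intro x hx
      simp only [mem_Icc] at hx
      intro h; linarith [h]
  have h2 : ContinuousOn (fun x : ℝ => x * (1-x) * Real.log (1 - x)) (Icc (0:ℝ) (1/2)) :=
    ((continuousOn_id.mul (continuousOn_const.sub continuousOn_id))).mul h1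
  have h3 : Continuous (fun x : ℝ => (1-x) * (x * Real.log x)) :=
    (continuous_const.sub continuous_id).mul Real.continuous_mul_log
  have he : F = fun x => x * (1-x) * Real.log (1-x) - (1-x) * (x * Real.log x) := by
    funext x; simp [F, L]; ring
  rw [he]
  exact h2.sub h3.continuousOn

lemma concaveOn_F : ConcaveOn ℝ (Icc (0:ℝ) (1/2)) F := by
  have hanti : AntitoneOn (deriv F) (interior (Icc (0:ℝ) (1/2))) := by
    rw [interior_Icc]
    intro x hx y hy hxy
    have hx1 : x < 1 := by linarith [hx.2]
    have hy1 : y < 1 := by linarith [hy.2]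
    rw [(hasDerivAt_F hy.1 hy1).deriv, (hasDerivAt_F hx.1 hx1).deriv]
    have h1 : (1 - 2*y) * L y ≤ (1 - 2*x) * L x := by
      apply mul_le_mul (by linarith) (L_anti ⟨hx.1, hx1⟩ ⟨hy.1, hy1⟩ hxy)
        (L_nonneg hy.1 hy.2.le) (by linarith [hx.2])
    linarith
  exact hanti.concaveOn_of_deriv (convex_Icc _ _) continuousOn_F
    (fun x hx => by
      rw [interior_Icc] at hx
      exact (hasDerivAt_F hx.1 (by linarith [hx.2])).differentiableAt.differentiableWithinAt)

lemma F_half : F (1/2) = 0 := by norm_num [F, L]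

lemma F_star_ge (hp : 0 ≤ p) (hp2 : p ≤ 1/2) {t : ℝ} (ht : t ∈ Icc (0:ℝ) (1/2)) :
    (1 - 2*p) * F t ≤ F (star t p) := by
  have hhalf : (1/2 : ℝ) ∈ Icc (0:ℝ) (1/2) := by constructor <;> norm_num
  have h := concaveOn_F.2 ht hhalf (by linarith : (0:ℝ) ≤ 1 - 2*p)
    (by linarith : (0:ℝ) ≤ 2*p) (by ring)
  simp only [smul_eq_mul, F_half, mul_zero, add_zero] at h
  have hs : star t p = (1 - 2*p) * t + 2*p * (1/2) := by rw [star_eq]; ring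
  rw [hs]
  linarith [h]

noncomputable def rho (p t : ℝ) : ℝ := (1 - 2*p) * L (star t p) / L t

lemma hasDerivAt_star (p : ℝ) (t : ℝ) :
    HasDerivAt (fun t : ℝ => star t p) (1 - 2*p) t := by
  have he : (fun t : ℝ => star t p) = fun t => p + (1 - 2*p)*t :=
    funext fun t => by rw [star_eq]
  rw [he]
  simpa using ((hasDerivAt_id t).const_mul (1 - 2*p)).const_add p

lemma star_mem (hp : 0 ≤ p) (hp2 : p ≤ 1/2) {t : ℝ} (ht : t ∈ Ioo (0:ℝ) (1/2)) :
    star t p ∈ Ioo (0:ℝ) 1 ∧ star t p ≤ 1/2 := by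
  have h1 := star_pos hp ht.1 ht.2.le
  have h2 := star_le_half hp2 hp ht.2.le
  exact ⟨⟨h1, by linarith⟩, h2⟩

lemma hasDerivAt_rho (hp : 0 ≤ p) (hp2 : p ≤ 1/2) {t : ℝ} (ht : t ∈ Ioo (0:ℝ) (1/2)) :
    HasDerivAt (rho p)
      (((1-2*p) * ((-(1 - star t p)⁻¹ - (star t p)⁻¹) * (1-2*p)) * L t -
        (1-2*p) * L (star t p) * (-(1-t)⁻¹ - t⁻¹)) / (L t)^2) t := by
  obtain ⟨hbmem, hb2⟩ := star_mem hp hp2 ht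
  have hLt : L t ≠ 0 := (L_pos ht.1 ht.2).ne'
  have dN : HasDerivAt (fun t => (1-2*p) * L (star t p))
      ((-(1 - star t p)⁻¹ - (star t p)⁻¹) * (1-2*p) * (1-2*p)) t := by
    have := ((hasDerivAt_L hbmem.1 hbmem.2).comp t (hasDerivAt_star p t)).const_mul (1-2*p)
    refine this.congr_deriv ?_; ring
  have dD : HasDerivAt L (-(1-t)⁻¹ - t⁻¹) t := hasDerivAt_L ht.1 (by linarith [ht.2])
  have := dN.div dD hLt
  have hrho : rho p = fun t => (1-2*p) * L (star t p) / L t := rfl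
  rw [hrho]
  refine this.congr_deriv ?_
  ring

lemma rho_mono (hp : 0 ≤ p) (hp2 : p ≤ 1/2) : MonotoneOn (rho p) (Ioo (0:ℝ) (1/2)) := by
  have hint : interior (Ioo (0:ℝ) (1/2)) = Ioo (0:ℝ) (1/2) := isOpen_Ioo.interior_eq
  apply monotoneOn_of_deriv_nonneg (convex_Ioo _ _)
  · exact fun t ht => (hasDerivAt_rho hp hp2 ht).continuousAt.continuousWithinAt
  · rw [hint]
    exact fun t ht => (hasDerivAt_rho hp hp2 ht).differentiableAt.differentiableWithinAt
  · rw [hint]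
    intro t ht
    rw [(hasDerivAt_rho hp hp2 ht).deriv]
    apply div_nonneg _ (sq_nonneg _)
    obtain ⟨hbmem, hb2⟩ := star_mem hp hp2 ht
    have ht1 : t < 1 := by linarith [ht.2]
    have hne : t ≠ 0 := ht.1.ne'
    have hne1 : (1:ℝ) - t ≠ 0 := by intro h; linarith [h]
    have hbne : star t p ≠ 0 := hbmem.1.ne'
    have hbne1 : (1:ℝ) - star t p ≠ 0 := by intro h; linarith [hbmem.2, h]
    have key := F_star_ge hp hp2 (⟨ht.1.le, ht.2.le⟩ : t ∈ Icc (0:ℝ) (1/2))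
    have heq : (1-2*p) * ((-(1 - star t p)⁻¹ - (star t p)⁻¹) * (1-2*p)) * L t -
        (1-2*p) * L (star t p) * (-(1-t)⁻¹ - t⁻¹) =
        (1-2*p) * (F (star t p) - (1-2*p) * F t) /
          (t * (1-t) * (star t p * (1 - star t p))) := by
      simp only [F]
      field_simp
      ring
    rw [heq]
    apply div_nonneg (mul_nonneg (by linarith) (by linarith [key]))
    have := mul_pos (mul_pos ht.1 (by linarith : (0:ℝ) < 1 - t))
      (mul_pos hbmem.1 (by linarith [hbmem.2] : (0:ℝ) < 1 - star t p))
    linarith [this]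

lemma continuous_Hb_star (p : ℝ) : Continuous fun t : ℝ => Hb (star t p) := by
  apply continuous_Hb.comp
  have he : (fun t : ℝ => star t p) = fun t => p + (1 - 2*p)*t :=
    funext fun t => by rw [star_eq]
  rw [he]
  exact continuous_const.add (continuous_const.mul continuous_id)

lemma hasDerivAt_Hb_star (hp : 0 ≤ p) (hp2 : p ≤ 1/2) {t : ℝ} (ht : t ∈ Ioo (0:ℝ) (1/2)) :
    HasDerivAt (fun t => Hb (star t p)) ((1-2*p) * L (star t p) / Real.log 2) t := by
  obtain ⟨hbmem, hb2⟩ := star_mem hp hp2 ht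
  have := (hasDerivAt_Hb hbmem.1 hbmem.2).comp t (hasDerivAt_star p t)
  refine this.congr_deriv ?_
  ring


lemma slope_eq_rho (p : ℝ) (hp : 0 ≤ p) (hp2 : p ≤ 1/2) (g : ℝ → ℝ)
    (hg : ∀ y ∈ Icc (0:ℝ) 1, g y ∈ Icc (0:ℝ) (1/2) ∧ Hb (g y) = y)
    {u v : ℝ} (hu : u ∈ Icc (0:ℝ) 1) (hv : v ∈ Icc (0:ℝ) 1) (huv : u < v) :
    ∃ c ∈ Ioo (g u) (g v),
      (Hb (star (g v) p) - Hb (star (g u) p)) / (v - u) = rho p c := by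
  obtain ⟨hgu, hgu'⟩ := hg u hu
  obtain ⟨hgv, hgv'⟩ := hg v hv
  have hlt : g u < g v := by
    by_contra hle
    push_neg at hle
    have := strictMonoOn_Hb.monotoneOn hgv hgu hle
    rw [hgu', hgv'] at this
    linarith
  have hsub : Ioo (g u) (g v) ⊆ Ioo (0:ℝ) (1/2) :=
    fun w hw => ⟨lt_of_le_of_lt hgu.1 hw.1, lt_of_lt_of_le hw.2 hgv.2⟩
  have hyd : ∀ t ∈ Ioo (g u) (g v),
      HasDerivAt (fun t => Hb (star t p)) ((1-2*p) * L (star t p) / Real.log 2) t :=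
    fun t ht => hasDerivAt_Hb_star hp hp2 (hsub ht)
  have hxd : ∀ t ∈ Ioo (g u) (g v), HasDerivAt Hb (L t / Real.log 2) t := by
    intro t ht
    have h := hsub ht
    exact hasDerivAt_Hb h.1 (by linarith [h.2])
  obtain ⟨c, hc, hceq⟩ := exists_ratio_hasDerivAt_eq_ratio_slope
    (fun t => Hb (star t p)) (fun t => (1-2*p) * L (star t p) / Real.log 2) hlt
    (continuous_Hb_star p).continuousOn hyd
    Hb (fun t => L t / Real.log 2) continuous_Hb.continuousOn hxd
  refine ⟨c, hc, ?_⟩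
  have hc' := hsub hc
  have hLc : 0 < L c := L_pos hc'.1 hc'.2
  have hlog2 : Real.log 2 ≠ 0 := (Real.log_pos (by norm_num)).ne'
  rw [hgu', hgv'] at hceq
  have hvu : (0:ℝ) < v - u := by linarith
  have h1 : (v - u) * ((1-2*p) * L (star c p)) =
      (Hb (star (g v) p) - Hb (star (g u) p)) * L c := by
    field_simp at hceq
    linear_combination hceq
  rw [show rho p c = (1-2*p) * L (star c p) / L c from rfl,
    div_eq_div_iff hvu.ne' hLc.ne']
  linear_combination (-1) * h1

lemma phi_convex (p : ℝ) (hp : 0 ≤ p) (hp2 : p ≤ 1/2) (g : ℝ → ℝ)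
    (hg : ∀ y ∈ Icc (0:ℝ) 1, g y ∈ Icc (0:ℝ) (1/2) ∧ Hb (g y) = y) :
    ConvexOn ℝ (Icc (0:ℝ) 1) (fun h => Hb (star (g h) p)) := by
  apply convexOn_of_slope_mono_adjacent (convex_Icc _ _)
  intro x y z hx hz hxy hyz
  have hy : y ∈ Icc (0:ℝ) 1 := ⟨le_trans hx.1 hxy.le, le_trans hyz.le hz.2⟩
  obtain ⟨c1, hc1, he1⟩ := slope_eq_rho p hp hp2 g hg hx hy hxy
  obtain ⟨c2, hc2, he2⟩ := slope_eq_rho p hp hp2 g hg hy hz hyz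
  rw [he1, he2]
  have m1 : c1 ∈ Ioo (0:ℝ) (1/2) :=
    ⟨lt_of_le_of_lt (hg x hx).1.1 hc1.1, lt_of_lt_of_le hc1.2 (hg y hy).1.2⟩
  have m2 : c2 ∈ Ioo (0:ℝ) (1/2) :=
    ⟨lt_of_le_of_lt (hg y hy).1.1 hc2.1, lt_of_lt_of_le hc2.2 (hg z hz).1.2⟩
  exact rho_mono hp hp2 m1 m2 (le_of_lt (lt_trans hc1.2 hc2.1))


variable {Ω : Type} [Fintype Ω]

lemma pmfOf_nonneg {α : Type} [DecidableEq α] (μ : FinProb Ω) (X : Ω → α) (a : α) :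
    0 ≤ pmfOf μ X a := by
  apply Finset.sum_nonneg
  intro ω _
  split
  · exact μ.nonneg ω
  · exact le_rfl

lemma sum_pmfOf {α : Type} [Fintype α] [DecidableEq α] (μ : FinProb Ω) (X : Ω → α) :
    ∑ a, pmfOf μ X a = 1 := by
  simp only [pmfOf]
  rw [Finset.sum_comm]
  have : ∀ ω : Ω, ∑ a : α, (if X ω = a then μ.p ω else 0) = μ.p ω := by
    intro ω
    simp
  simp only [this]
  exact μ.sum_one

lemma pmfOf_pair_swap {α β : Type} [DecidableEq α] [DecidableEq β]
    (μ : FinProb Ω) (f : Ω → α) (h : Ω → β) (a : α) (b : β) :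
    pmfOf μ (fun ω => (f ω, h ω)) (a, b) = pmfOf μ (fun ω => (h ω, f ω)) (b, a) := by
  simp only [pmfOf, Prod.mk.injEq]
  apply Finset.sum_congr rfl
  intro ω _
  congr 1
  simp [and_comm]

lemma H2_swap {α β : Type} [Fintype α] [Fintype β] [DecidableEq α] [DecidableEq β]
    (μ : FinProb Ω) (f : Ω → α) (h : Ω → β) :
    H2 μ (fun ω => (f ω, h ω)) = H2 μ (fun ω => (h ω, f ω)) := by
  simp only [H2]
  congr 1
  rw [Fintype.sum_prod_type, Fintype.sum_prod_type, Finset.sum_comm]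
  apply Finset.sum_congr rfl
  intro b _
  apply Finset.sum_congr rfl
  intro a _
  rw [pmfOf_pair_swap]

lemma pmfOf_fst {α β : Type} [Fintype β] [DecidableEq α] [DecidableEq β]
    (μ : FinProb Ω) (f : Ω → α) (h : Ω → β) (a : α) :
    ∑ b, pmfOf μ (fun ω => (f ω, h ω)) (a, b) = pmfOf μ f a := by
  simp only [pmfOf, Prod.mk.injEq]
  rw [Finset.sum_comm]
  apply Finset.sum_congr rfl
  intro ω _
  by_cases hfa : f ω = a <;> simp [hfa]

lemma pmfOf_mid3 {α β γ : Type} [Fintype β] [DecidableEq α] [DecidableEq β] [DecidableEq γ]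
    (μ : FinProb Ω) (f : Ω → α) (h : Ω → β) (k : Ω → γ) (a : α) (c : γ) :
    ∑ b, pmfOf μ (fun ω => (f ω, h ω, k ω)) (a, b, c) = pmfOf μ (fun ω => (f ω, k ω)) (a, c) := by
  simp only [pmfOf, Prod.mk.injEq]
  rw [Finset.sum_comm]
  apply Finset.sum_congr rfl
  intro ω _
  by_cases hfa : f ω = a <;> by_cases hkc : k ω = c <;> simp [hfa, hkc]

lemma Hb_one : Hb 1 = 0 := by simp [Hb]

lemma entropy_term {q r0 r1 : ℝ} (h0 : 0 ≤ r0) (h1 : 0 ≤ r1) (hq : q = r1 + r0) :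
    q * Real.logb 2 q - r1 * Real.logb 2 r1 - r0 * Real.logb 2 r0 = q * Hb (r1 / q) := by
  rcases eq_or_lt_of_le (by linarith : (0:ℝ) ≤ q) with hq0 | hq0
  · have hr1 : r1 = 0 := by linarith
    have hr0 : r0 = 0 := by linarith
    simp [← hq0, hr1, hr0]
  rcases eq_or_lt_of_le h1 with hr1 | hr1
  · have hr0 : r0 = q := by linarith
    simp [← hr1, hr0, Hb_zero]
  rcases eq_or_lt_of_le h0 with hr0 | hr0
  · have hr1' : r1 = q := by linarith
    rw [hr1', ← hr0]
    rw [div_self hq0.ne']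
    simp [Hb_one]
  · -- main case
    have hqne : q ≠ 0 := hq0.ne'
    set a := r1 / q with ha
    have har1 : r1 = q * a := by rw [ha]; field_simp
    have hsub : 1 - a = r0 / q := by
      field_simp [ha]
      linarith
    have har0 : r0 = q * (1 - a) := by
      rw [hsub]; field_simp
    have hane : a ≠ 0 := by
      rw [ha]; positivity
    have hane1 : 1 - a ≠ 0 := by
      rw [hsub]; positivity
    have e1 : Real.logb 2 r1 = Real.logb 2 q + Real.logb 2 a := by
      rw [har1, Real.logb_mul hqne hane]
    have e0 : Real.logb 2 r0 = Real.logb 2 q + Real.logb 2 (1 - a) := by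
      rw [har0, Real.logb_mul hqne hane1]
    rw [e1, e0, Hb.eq_def]
    linear_combination Real.logb 2 q * hq - Real.logb 2 a * har1 - Real.logb 2 (1-a) * har0

lemma condH2_expand {Ω U' : Type} [Fintype Ω] [Fintype U'] [DecidableEq U']
    (μ : FinProb Ω) (U : Ω → U') (X : Ω → Bool) :
    condH2 μ X U = ∑ u, (pmfOf μ U u * Real.logb 2 (pmfOf μ U u)
      - pmfOf μ (fun ω => (U ω, X ω)) (u, true) *
          Real.logb 2 (pmfOf μ (fun ω => (U ω, X ω)) (u, true))
      - pmfOf μ (fun ω => (U ω, X ω)) (u, false) *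
          Real.logb 2 (pmfOf μ (fun ω => (U ω, X ω)) (u, false))) := by
  rw [condH2.eq_def, H2_swap]
  simp only [H2]
  rw [Fintype.sum_prod_type]
  simp only [Fintype.sum_bool]
  rw [Finset.sum_sub_distrib, Finset.sum_sub_distrib, Finset.sum_add_distrib]
  ring

end MGL

open MGL in
theorem mrs_gerber_markov {Ω U' : Type} [Fintype Ω] [Fintype U'] [DecidableEq U']
    (μ : FinProb Ω) (U : Ω → U') (X Y : Ω → Bool) (p : ℝ) (hp : p ∈ Set.Icc (0:ℝ) (1/2))
    (hmarkov : Markov3 μ U X Y)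
    (hbsc : ∀ (u : U') (x y : Bool),
      pmfOf μ (fun ω => (U ω, X ω, Y ω)) (u, x, y) =
        pmfOf μ (fun ω => (U ω, X ω)) (u, x) * (if y = x then 1 - p else p))
    (g : ℝ → ℝ) (hg : ∀ y ∈ Set.Icc (0:ℝ) 1, g y ∈ Set.Icc (0:ℝ) (1/2) ∧ Hb (g y) = y) :
    Hb (star (g (condH2 μ X U)) p) ≤ condH2 μ Y U := by
  obtain ⟨hp0, hp2⟩ := hp
  classical
  set q : U' → ℝ := fun u => pmfOf μ U u with hqdef
  set r : U' → Bool → ℝ := fun u x => pmfOf μ (fun ω => (U ω, X ω)) (u, x) with hrdef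
  set s : U' → Bool → ℝ := fun u y => pmfOf μ (fun ω => (U ω, Y ω)) (u, y) with hsdef
  set a : U' → ℝ := fun u => r u true / q u with hadef
  set c : U' → ℝ := fun u => if a u ≤ 1/2 then a u else 1 - a u with hcdef
  have hq_nonneg : ∀ u, 0 ≤ q u := fun u => pmfOf_nonneg μ U u
  have hr_nonneg : ∀ u x, 0 ≤ r u x := fun u x => pmfOf_nonneg μ _ _
  have hs_nonneg : ∀ u y, 0 ≤ s u y := fun u y => pmfOf_nonneg μ _ _
  have hq_marg : ∀ u, q u = r u true + r u false := by
    intro u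
    have h := pmfOf_fst μ U X u
    rw [Fintype.sum_bool] at h
    exact h.symm
  have hs_marg : ∀ u, q u = s u true + s u false := by
    intro u
    have h := pmfOf_fst μ U Y u
    rw [Fintype.sum_bool] at h
    exact h.symm
  have hs_eq : ∀ u, s u true = r u true * (1 - p) + r u false * p := by
    intro u
    have h1 := pmfOf_mid3 μ U X Y u true
    rw [Fintype.sum_bool] at h1
    rw [hbsc u true true, hbsc u false true] at h1
    simpa using h1.symm
  have ha_mem : ∀ u, a u ∈ Set.Icc (0:ℝ) 1 := by
    intro u
    rcases eq_or_lt_of_le (hq_nonneg u) with h0 | h0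
    · simp [hadef, ← h0]
    · constructor
      · exact div_nonneg (hr_nonneg u true) (hq_nonneg u)
      · rw [hadef]
        apply div_le_one_of_le₀ _ (hq_nonneg u)
        have := hr_nonneg u false
        linarith [hq_marg u]
  have hc_mem : ∀ u, c u ∈ Set.Icc (0:ℝ) (1/2) := by
    intro u
    obtain ⟨h1, h2⟩ := ha_mem u
    rw [hcdef]
    dsimp only
    split
    · constructor <;> linarith
    · constructor <;> linarith
  have hHb_ac : ∀ u, Hb (a u) = Hb (c u) := by
    intro u
    rw [hcdef]
    dsimp only
    split
    · rfl
    · rw [Hb_symm]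
  have hHb_star_ac : ∀ u, Hb (star (a u) p) = Hb (star (c u) p) := by
    intro u
    rw [hcdef]
    dsimp only
    split
    · rfl
    · have h1 : star (a u) p = 1 - star (1 - a u) p := by
        rw [star_eq, star_eq]; ring
      rw [h1, Hb_symm]
  have hsum_q : ∑ u, q u = 1 := sum_pmfOf μ U
  have hX : condH2 μ X U = ∑ u, q u * Hb (c u) := by
    rw [condH2_expand μ U X]
    apply Finset.sum_congr rfl
    intro u _
    rw [entropy_term (hr_nonneg u false) (hr_nonneg u true) (hq_marg u)]
    rw [← hHb_ac u]
  have hY : condH2 μ Y U = ∑ u, q u * Hb (star (c u) p) := by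
    rw [condH2_expand μ U Y]
    apply Finset.sum_congr rfl
    intro u _
    rw [entropy_term (hs_nonneg u false) (hs_nonneg u true) (hs_marg u)]
    rcases eq_or_lt_of_le (hq_nonneg u) with h0 | h0
    · rw [← h0]; ring
    · have hst : s u true / q u = star (a u) p := by
        rw [hs_eq u]
        have hrf : r u false = q u - r u true := by linarith [hq_marg u]
        rw [hrf, star_eq, hadef]
        field_simp
        ring
      rw [hst, ← hHb_star_ac u]
  have hHbc : ∀ u, Hb (c u) ∈ Set.Icc (0:ℝ) 1 := fun u => Hb_mem_Icc (hc_mem u)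
  have hgc : ∀ u, g (Hb (c u)) = c u := by
    intro u
    obtain ⟨hm, he⟩ := hg (Hb (c u)) (hHbc u)
    exact strictMonoOn_Hb.injOn hm (hc_mem u) he
  have hconv := phi_convex p hp0 hp2 g hg
  have hjen := hconv.map_sum_le (t := Finset.univ)
    (fun u _ => hq_nonneg u) hsum_q (fun u _ => hHbc u)
  simp only [smul_eq_mul, hgc] at hjen
  rw [hX, hY]
  exact hjen
end
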